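/- For every sign vector ε, every 1 ≤ i ≤ n and every 1 ≤ j ≤ n+1 (n ≥ 1), the face F^ε_{i,j} is empty if and only if (i = 1 and j = 1) or (i = n and j = n+1). -/

import Mathlib

noncomputable section

open Set

/-- The brick `Y^ε_i ⊆ S^n` (coordinate indices are 0-based, so the 1-based
condition `k ≤ i` becomes `(k : ℕ) < i`, and `k ≥ i+1` becomes `i ≤ (k : ℕ)`). -/
def Ybrick (n : ℕ) (ε : Fin (n + 1) → ℝ) (i : ℕ) : Set (EuclideanSpace ℝ (Fin (n + 1))) :=
  {v | ‖v‖ = 1 ∧ (∀ k, 0 ≤ ε k * v k) ∧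
    (∃ k : Fin (n + 1), (k : ℕ) < i ∧ v k ≠ 0) ∧
    (∃ k : Fin (n + 1), i ≤ (k : ℕ) ∧ v k ≠ 0)}

/-- The `j`-th face `F^ε_{i,j}` of `Y^ε_i` (here `j : Fin (n+1)` is the 0-based
index of the 1-based coordinate `j+1`). -/
def Fface (n : ℕ) (ε : Fin (n + 1) → ℝ) (i : ℕ) (j : Fin (n + 1)) :
    Set (EuclideanSpace ℝ (Fin (n + 1))) :=
  {v ∈ Ybrick n ε i | v j = 0}

/-- `F^ε_{i,j} = ∅` iff (`i = 1` and `j = 1`) or (`i = n` and `j = n + 1`)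
(in 1-based indexing of coordinates; the 0-based index `j` satisfies
`(j : ℕ) = 0` resp. `(j : ℕ) = n`). -/


lemma sq_eps {x : ℝ} (h : x = 1 ∨ x = -1) : x ^ 2 = 1 := by rcases h with h | h <;> rw [h] <;> ring

lemma face_nonempty (n : ℕ) (ε : Fin (n + 1) → ℝ) (hε : ∀ k, ε k = 1 ∨ ε k = -1)
    (i : ℕ) (j a b : Fin (n + 1)) (hab : a ≠ b) (haj : a ≠ j) (hbj : b ≠ j)
    (hai : (a : ℕ) < i) (hbi : i ≤ (b : ℕ)) :
    ({v ∈ ({v | ‖v‖ = 1 ∧ (∀ k, 0 ≤ ε k * v k) ∧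
      (∃ k : Fin (n + 1), (k : ℕ) < i ∧ v k ≠ 0) ∧
      (∃ k : Fin (n + 1), i ≤ (k : ℕ) ∧ v k ≠ 0)} :
      Set (EuclideanSpace ℝ (Fin (n + 1)))) | v j = 0} : Set _).Nonempty := by
  set s : ℝ := (Real.sqrt 2)⁻¹ with hs
  have hs0 : 0 < s := by positivity
  have hs2 : s ^ 2 = 2⁻¹ := by
    rw [hs, ← Real.sqrt_inv, Real.sq_sqrt]; norm_num
  refine ⟨(WithLp.toLp 2 (fun k => if k = a then ε a * s else if k = b then ε b * s else 0) :
    EuclideanSpace ℝ (Fin (n + 1))), ⟨?_, ?_, ⟨a, hai, ?_⟩, ⟨b, hbi, ?_⟩⟩, ?_⟩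
  · rw [EuclideanSpace.norm_eq]
    simp only [PiLp.toLp_apply]
    have : ∀ k : Fin (n + 1),
        ‖(if k = a then ε a * s else if k = b then ε b * s else 0)‖ ^ 2 =
        if k = a then 2⁻¹ else if k = b then 2⁻¹ else 0 := by
      intro k
      split_ifs with h1 h2 <;>
        simp [Real.norm_eq_abs, sq_abs, mul_pow, sq_eps (hε _), hs2]
    rw [Finset.sum_congr rfl fun k _ => this k]
    rw [← Finset.add_sum_erase _ _ (Finset.mem_univ a), if_pos rfl,
      Finset.sum_congr rfl (fun x hx => if_neg (Finset.ne_of_mem_erase hx)),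
      Finset.sum_ite_eq' _ b, if_pos (by simp [Ne.symm hab])]
    norm_num
  · intro k
    change 0 ≤ ε k * (if k = a then ε a * s else if k = b then ε b * s else 0)
    split_ifs with h1 h2
    · subst h1; rw [← mul_assoc, ← sq, sq_eps (hε _)]; linarith
    · subst h2; rw [← mul_assoc, ← sq, sq_eps (hε _)]; linarith
    · simp
  · change (if a = a then ε a * s else _) ≠ 0
    rw [if_pos rfl]
    rcases hε a with h | h <;> rw [h] <;> simp [ne_of_gt hs0, hs0.ne']
  · change (if b = a then _ else if b = b then ε b * s else 0) ≠ 0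
    rw [if_neg (Ne.symm hab), if_pos rfl]
    rcases hε b with h | h <;> rw [h] <;> simp [ne_of_gt hs0, hs0.ne']
  · change (if j = a then _ else if j = b then _ else (0:ℝ)) = 0
    rw [if_neg (Ne.symm haj), if_neg (Ne.symm hbj)]

theorem Fface_eq_empty_iff' (n : ℕ) (hn : 1 ≤ n) (ε : Fin (n + 1) → ℝ)
    (hε : ∀ k, ε k = 1 ∨ ε k = -1) (i : ℕ) (hi1 : 1 ≤ i) (hin : i ≤ n)
    (j : Fin (n + 1)) :
    ({v ∈ ({v | ‖v‖ = 1 ∧ (∀ k, 0 ≤ ε k * v k) ∧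
      (∃ k : Fin (n + 1), (k : ℕ) < i ∧ v k ≠ 0) ∧
      (∃ k : Fin (n + 1), i ≤ (k : ℕ) ∧ v k ≠ 0)} :
      Set (EuclideanSpace ℝ (Fin (n + 1)))) | v j = 0} : Set _) = ∅ ↔
      (i = 1 ∧ (j : ℕ) = 0) ∨ (i = n ∧ (j : ℕ) = n) := by
  constructor
  · intro hemp
    by_contra hc
    push_neg at hc
    obtain ⟨h1, h2⟩ := hc
    -- construct indices a b
    rcases lt_or_ge (j : ℕ) i with hji | hij
    · -- j < i; then if j = 0, i ≥ 2
      have hi2 : (j : ℕ) = 0 → 2 ≤ i := fun hj0 => by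
        have := h1; omega
      by_cases hj0 : (j : ℕ) = 0
      · have h2i := hi2 hj0
        have h1n : (1 : ℕ) < n + 1 := by omega
        have := face_nonempty n ε hε i j ⟨1, h1n⟩ ⟨i, by omega⟩
          (by rw [Fin.ne_iff_vne] <;> simp <;> omega) (by rw [Fin.ne_iff_vne] <;> simp <;> omega)
          (by rw [Fin.ne_iff_vne] <;> simp <;> omega) (by simp; omega) (by simp)
        rw [hemp] at this; exact Set.not_nonempty_empty this
      · have := face_nonempty n ε hε i j ⟨0, by omega⟩ ⟨i, by omega⟩
          (by rw [Fin.ne_iff_vne] <;> simp <;> omega) (by rw [Fin.ne_iff_vne] <;> simp <;> omega)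
          (by rw [Fin.ne_iff_vne] <;> simp <;> omega) (by simp; omega) (by simp)
        rw [hemp] at this; exact Set.not_nonempty_empty this
    · -- i ≤ j
      by_cases hij' : i = (j : ℕ)
      · have hiln : i < n := by
          have hjn : (j : ℕ) ≤ n := by omega
          rcases eq_or_lt_of_le hin with h | h
          · exact absurd (by omega : (j:ℕ) = n) (h2 h)
          · exact h
        have := face_nonempty n ε hε i j ⟨0, by omega⟩ ⟨i + 1, by omega⟩
          (by rw [Fin.ne_iff_vne] <;> simp <;> omega) (by rw [Fin.ne_iff_vne] <;> simp <;> omega)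
          (by rw [Fin.ne_iff_vne] <;> simp <;> omega) (by simp; omega) (by simp)
        rw [hemp] at this; exact Set.not_nonempty_empty this
      · have := face_nonempty n ε hε i j ⟨0, by omega⟩ ⟨i, by omega⟩
          (by rw [Fin.ne_iff_vne] <;> simp <;> omega) (by rw [Fin.ne_iff_vne] <;> simp <;> omega)
          (by rw [Fin.ne_iff_vne] <;> simp <;> omega) (by simp; omega) (by simp)
        rw [hemp] at this; exact Set.not_nonempty_empty this
  · rintro (⟨hi, hj⟩ | ⟨hi, hj⟩) <;> subst hi <;>
      refine Set.eq_empty_iff_forall_notMem.2 fun v hv => ?_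
    · obtain ⟨⟨_, _, ⟨k, hk1, hk2⟩, _⟩, hvj⟩ := hv
      have : k = j := by rw [Fin.ext_iff]; omega
      rw [this] at hk2; exact hk2 hvj
    · obtain ⟨⟨_, _, _, ⟨k, hk1, hk2⟩⟩, hvj⟩ := hv
      have : k = j := by have := k.isLt; rw [Fin.ext_iff]; omega
      rw [this] at hk2; exact hk2 hvj


theorem Fface_eq_empty_iff (n : ℕ) (hn : 1 ≤ n) (ε : Fin (n + 1) → ℝ)
    (hε : ∀ k, ε k = 1 ∨ ε k = -1) (i : ℕ) (hi1 : 1 ≤ i) (hin : i ≤ n)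
    (j : Fin (n + 1)) :
    Fface n ε i j = ∅ ↔ (i = 1 ∧ (j : ℕ) = 0) ∨ (i = n ∧ (j : ℕ) = n) :=
  Fface_eq_empty_iff' n hn ε hε i hi1 hin j
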